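/- Let V be a finite-dimensional symplectic vector space over a field of characteristic 2 with an s-good grading whose top nonzero degree is m ≥ 1, m odd, and let Q̄ ∈ Q(V)_2^0 with Ā = A_{Q̄}. Then {x ∈ V : Ā^m x = 0 and Q̄(Ā^{(m−1)/2} x) = 0} = V_{≥ −m+1}. -/

import Mathlib

/-- An `s`-good grading of a symplectic vector space `(V, B)`. -/
def SGood (k V : Type*) [Field k] [AddCommGroup V] [Module k V]
    (B : LinearMap.BilinForm k V) (Vg : ℤ → Submodule k V) : Prop :=
  DirectSum.IsInternal Vg ∧
  (∀ i : ℤ, 0 ≤ i →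
    Module.finrank k (Vg (-i)) = Module.finrank k (Vg i) ∧
    Module.finrank k (Vg (-i - 2)) ≤ Module.finrank k (Vg (-i))) ∧
  (∀ i : ℤ, Even i → Even (Module.finrank k (Vg i))) ∧
  (∀ i j : ℤ, i + j ≠ 0 → ∀ x ∈ Vg i, ∀ y ∈ Vg j, B x y = 0)

/-- `Q ∈ Q(V)₂⁰`: `A = A_Q` shifts the grading by `2`, `Q` vanishes on `V_i` for
`i ≠ -1`, `A^n : V_{-n} → V_n` is bijective for even `n ≥ 0`, and for odd `n ≥ 1`
the map `A^{(n-1)/2} : V_{-n} → V_{-1}` is injective with `Q` nondegenerate on its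
image (no nonzero vector of the image lies in the radical of the polar form of
`Q|_image` and has `Q`-value `0`). -/
def QV20 (k V : Type*) [Field k] [AddCommGroup V] [Module k V]
    (Vg : ℤ → Submodule k V) (Q : QuadraticForm k V) (A : Module.End k V) : Prop :=
  (∀ i : ℤ, ∀ x ∈ Vg i, A x ∈ Vg (i + 2)) ∧
  (∀ i : ℤ, i ≠ -1 → ∀ x ∈ Vg i, Q x = 0) ∧
  (∀ n : ℕ, Even n →
    (∀ x ∈ Vg (-(n : ℤ)), (A ^ n) x = 0 → x = 0) ∧
    (∀ y ∈ Vg (n : ℤ), ∃ x ∈ Vg (-(n : ℤ)), (A ^ n) x = y)) ∧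
  (∀ n : ℕ, Odd n →
    (∀ x ∈ Vg (-(n : ℤ)), (A ^ ((n - 1) / 2)) x = 0 → x = 0) ∧
    (∀ w ∈ ⇑(A ^ ((n - 1) / 2)) '' (Vg (-(n : ℤ)) : Set V),
      (∀ w' ∈ ⇑(A ^ ((n - 1) / 2)) '' (Vg (-(n : ℤ)) : Set V),
        QuadraticMap.polar Q w w' = 0) → Q w = 0 → w = 0))

/-- char 2, `(V, B)` symplectic with `s`-good grading of top
degree `m ≥ 1`, `m` odd, and `Q̄ ∈ Q(V)₂⁰` with `Ā = A_{Q̄}`.  Then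
`{x : Ā^m x = 0 and Q̄(Ā^{(m-1)/2} x) = 0} = V_{≥ -m+1}`. -/
theorem ker_pow_eq_filtration_odd
    (k V : Type*) [Field k] [CharP k 2] [AddCommGroup V] [Module k V]
    [FiniteDimensional k V]
    (B : LinearMap.BilinForm k V) (halt : B.IsAlt) (hnd : B.Nondegenerate)
    (Vg : ℤ → Submodule k V) (hg : SGood k V B Vg)
    (m : ℕ) (hm1 : 1 ≤ m) (hmo : Odd m)
    (hmtop : Vg (m : ℤ) ≠ ⊥) (hmbd : ∀ i : ℤ, (m : ℤ) < i → Vg i = ⊥)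
    (Q : QuadraticForm k V) (A : Module.End k V)
    (hA : ∀ x y : V, Q (x + y) - Q x - Q y = B (A x) y)
    (hQ : QV20 k V Vg Q A) :
    {x : V | (A ^ m) x = 0 ∧ Q ((A ^ ((m - 1) / 2)) x) = 0}
      = ((⨆ j ≥ (-(m : ℤ) + 1), Vg j : Submodule k V) : Set V) := by
  obtain ⟨hi, hdim, -, horth⟩ := hg
  obtain ⟨hshift, hQvan, -, hodd⟩ := hQ
  obtain ⟨c, hc⟩ := hmo
  have hm2 : (m - 1) / 2 = c := by omega
  -- grading of powers
  have hpow : ∀ (n : ℕ) (i : ℤ), ∀ x ∈ Vg i, (A ^ n) x ∈ Vg (i + 2 * (n : ℤ)) := by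
    intro n
    induction n with
    | zero => intro i x hx; simpa using hx
    | succ n ih =>
      intro i x hx
      have h1 : (A ^ (n + 1)) x = (A ^ n) (A x) := by
        rw [pow_succ, Module.End.mul_apply]
      rw [h1]
      have h2 := ih (i + 2) (A x) (hshift i x hx)
      have h3 : i + 2 + 2 * (n : ℤ) = i + 2 * ((n : ℕ) + 1 : ℕ) := by push_cast; ring
      rwa [h3] at h2
  -- vanishing in degrees below -m
  have hbotneg : ∀ j : ℤ, j < -(m : ℤ) → Vg j = ⊥ := by
    intro j hj
    have h0 : (0 : ℤ) ≤ -j := by omega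
    have h1 := (hdim (-j) h0).1
    rw [neg_neg] at h1
    rw [hmbd (-j) (by omega), finrank_bot] at h1
    exact Submodule.finrank_eq_zero.mp h1
  have hbot : ∀ j : ℤ, ((m : ℤ) < j ∨ j < -(m : ℤ)) → ∀ x ∈ Vg j, x = (0 : V) := by
    intro j hj x hx
    rcases hj with hj | hj
    · rw [hmbd j hj] at hx; exact (Submodule.mem_bot k).mp hx
    · rw [hbotneg j hj] at hx; exact (Submodule.mem_bot k).mp hx
  -- polar / adjointness
  have hpolar : ∀ u y : V, QuadraticMap.polar Q u y = B (A u) y := by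
    intro u y
    simpa only [QuadraticMap.polar] using hA u y
  have hadj : ∀ u y : V, B (A u) y = B u (A y) := by
    intro u y
    have h1 : B (A u) y = B (A y) u := by
      rw [← hpolar, ← hpolar, QuadraticMap.polar_comm]
    rw [h1, ← LinearMap.IsAlt.neg halt u (A y)]
    exact CharTwo.neg_eq _
  have hadjpow : ∀ (n : ℕ) (u y : V), B ((A ^ n) u) y = B u ((A ^ n) y) := by
    intro n
    induction n with
    | zero => simp
    | succ n ih =>
      intro u y
      rw [pow_succ, Module.End.mul_apply, Module.End.mul_apply, ih (A u) y, hadj]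
      congr 1
      rw [← Module.End.mul_apply A (A ^ n), ← Module.End.mul_apply (A ^ n) A,
        ← pow_succ, ← pow_succ']
  set S : Submodule k V := ⨆ j ≥ (-(m : ℤ) + 1), Vg j with hS
  -- induction principle for S
  have Sind : ∀ p : V → Prop, p 0 → (∀ a b, p a → p b → p (a + b)) →
      (∀ j : ℤ, -(m : ℤ) + 1 ≤ j → ∀ x ∈ Vg j, p x) → ∀ x ∈ S, p x := by
    intro p h0 hadd hmem x hx
    refine Submodule.iSup_induction (motive := p)
      (fun j : ℤ => ⨆ _ : j ≥ (-(m : ℤ) + 1), Vg j) hx ?_ h0 hadd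
    intro j y hy
    by_cases hj : j ≥ (-(m : ℤ) + 1)
    · simp only [iSup_pos hj] at hy
      exact hmem j hj y hy
    · simp only [iSup_neg hj, Submodule.mem_bot] at hy
      rw [hy]; exact h0
  have hmemS : ∀ j : ℤ, -(m : ℤ) + 1 ≤ j → ∀ x ∈ Vg j, x ∈ S := by
    intro j hj x hx
    exact Submodule.mem_iSup_of_mem j (Submodule.mem_iSup_of_mem hj hx)
  -- A^m kills S
  have hAmS : ∀ x ∈ S, (A ^ m) x = 0 := by
    refine fun x hx => Sind (fun x => (A ^ m) x = 0) (map_zero _)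
      (fun a b ha hb => by simp only [map_add, ha, hb, add_zero]) ?_ x hx
    intro j hj y hy
    exact hbot (j + 2 * (m : ℤ)) (Or.inl (by omega)) _ (hpow m j y hy)
  -- cross terms between S and S vanish
  have hcrossSS : ∀ b ∈ S, ∀ a ∈ S, B ((A ^ (c + 1)) a) ((A ^ c) b) = 0 := by
    refine fun b hb => Sind (fun b => ∀ a ∈ S, B ((A ^ (c + 1)) a) ((A ^ c) b) = 0)
      (by simp) ?_ ?_ b hb
    · intro b1 b2 h1 h2 a ha
      rw [map_add, map_add, h1 a ha, h2 a ha, add_zero]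
    · intro j hj y hy
      refine fun a ha => Sind (fun a => B ((A ^ (c + 1)) a) ((A ^ c) y) = 0)
        (by simp) (fun a1 a2 h1 h2 => by simp only [map_add, LinearMap.add_apply, h1, h2, add_zero])
        ?_ a ha
      intro i hi' z hz
      refine horth (i + 2 * ((c + 1 : ℕ) : ℤ)) (j + 2 * (c : ℤ)) ?_ _
        (hpow (c + 1) i z hz) _ (hpow c j y hy)
      push_cast
      omega
  -- cross terms between Vg(-m) and S vanish
  have hcrossV : ∀ s ∈ S, ∀ v ∈ Vg (-(m : ℤ)), B ((A ^ (c + 1)) v) ((A ^ c) s) = 0 := by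
    refine fun s hs => Sind (fun s => ∀ v ∈ Vg (-(m : ℤ)), B ((A ^ (c + 1)) v) ((A ^ c) s) = 0)
      (by simp) ?_ ?_ s hs
    · intro s1 s2 h1 h2 v hv
      rw [map_add, map_add, h1 v hv, h2 v hv, add_zero]
    · intro j hj y hy v hv
      refine horth (-(m : ℤ) + 2 * ((c + 1 : ℕ) : ℤ)) (j + 2 * (c : ℤ)) ?_ _
        (hpow (c + 1) (-(m : ℤ)) v hv) _ (hpow c j y hy)
      push_cast
      omega
  -- Q vanishes on A^c of S
  have hQS : ∀ x ∈ S, x ∈ S ∧ Q ((A ^ c) x) = 0 := by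
    refine fun x hx => Sind (fun x => x ∈ S ∧ Q ((A ^ c) x) = 0)
      ⟨zero_mem _, by simp⟩ ?_ ?_ x hx
    · rintro a b ⟨haS, ha⟩ ⟨hbS, hb⟩
      refine ⟨add_mem haS hbS, ?_⟩
      have hq : Q ((A ^ c) a + (A ^ c) b)
          = Q ((A ^ c) a) + Q ((A ^ c) b) + B (A ((A ^ c) a)) ((A ^ c) b) := by
        linear_combination hA ((A ^ c) a) ((A ^ c) b)
      have hAA : A ((A ^ c) a) = (A ^ (c + 1)) a := by
        rw [pow_succ', Module.End.mul_apply]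
      rw [map_add, hq, ha, hb, hAA, hcrossSS b hbS a haS, add_zero, add_zero]
    · intro j hj y hy
      exact ⟨hmemS j hj y hy, hQvan (j + 2 * (c : ℤ)) (by omega) _ (hpow c j y hy)⟩
  ext x
  simp only [Set.mem_setOf_eq, SetLike.mem_coe, hm2]
  constructor
  · rintro ⟨hxm, hxq⟩
    have htop : x ∈ Vg (-(m : ℤ)) ⊔ S := by
      have h1 : (⨆ j, Vg j) = ⊤ := hi.submodule_iSup_eq_top
      have h2 : (⨆ j, Vg j : Submodule k V) ≤ Vg (-(m : ℤ)) ⊔ S := by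
        refine iSup_le fun j => ?_
        rcases lt_trichotomy j (-(m : ℤ)) with hj | hj | hj
        · rw [hbotneg j hj]; exact bot_le
        · rw [hj]; exact le_sup_left
        · exact le_trans
            (le_iSup₂ (f := fun (j : ℤ) (_ : j ≥ -(m : ℤ) + 1) => Vg j) j (by omega))
            le_sup_right
      exact h2 (h1 ▸ Submodule.mem_top)
    obtain ⟨v, hv, s, hs, rfl⟩ := Submodule.mem_sup.mp htop
    have hAv : (A ^ m) v = 0 := by
      have h3 : (A ^ m) v + (A ^ m) s = 0 := by rw [← map_add]; exact hxm
      rwa [hAmS s hs, add_zero] at h3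
    have hqv : Q ((A ^ c) v) = 0 := by
      have hexp : Q ((A ^ c) v + (A ^ c) s)
          = Q ((A ^ c) v) + Q ((A ^ c) s) + B (A ((A ^ c) v)) ((A ^ c) s) := by
        linear_combination hA ((A ^ c) v) ((A ^ c) s)
      have hAA : A ((A ^ c) v) = (A ^ (c + 1)) v := by
        rw [pow_succ', Module.End.mul_apply]
      rw [map_add, hexp, (hQS s hs).2, hAA, hcrossV s hs v hv, add_zero, add_zero] at hxq
      exact hxq
    obtain ⟨hinj, hndg⟩ := hodd m ⟨c, hc⟩
    rw [hm2] at hinj hndg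
    have hw0 : (A ^ c) v = 0 := by
      refine hndg _ ⟨v, hv, rfl⟩ ?_ hqv
      rintro w' ⟨v', hv', rfl⟩
      have hAA : A ((A ^ c) v) = (A ^ (c + 1)) v := by
        rw [pow_succ', Module.End.mul_apply]
      rw [hpolar, hAA, ← hadjpow c ((A ^ (c + 1)) v) v']
      have hcomp : (A ^ c) ((A ^ (c + 1)) v) = (A ^ m) v := by
        rw [← Module.End.mul_apply, ← pow_add]
        have hcm : c + (c + 1) = m := by omega
        rw [hcm]
      rw [hcomp, hAv]
      simp
    have hv0 : v = 0 := hinj v hv hw0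
    rw [hv0, zero_add]
    exact hs
  · intro hx
    exact ⟨hAmS x hx, (hQS x hx).2⟩
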